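/- The combined profile p̂ satisfies X_{p̂}(t) ≤ (e/(e−1))·OPT(t) for all t ≥ 0, where X_{p̂}(t) = B_{p̂}(t) + ∫_0^t R_{p̂}(z) dz is the total expected cost, given that each two-slope profile p^i is e/(e−1)-competitive, i.e., X_{p^i}(t) ≤ (e/(e−1))·min{b_i − b_{i−1}, (r_{i−1} − r_i)·t} for all t. -/

import Mathlib

open scoped BigOperators

/-- Abel-type summation identity for the combined profile weights. -/
lemma abel_sum (q c : ℕ → ℝ) : ∀ k, 1 ≤ k →
    ∑ i ∈ Finset.range (k + 1),
      (if i = 0 then 1 - q 1 else if i = k then q k else q i - q (i + 1)) * c i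
      = c 0 + ∑ i ∈ Finset.range k, q (i + 1) * (c (i + 1) - c i) := by
  intro k hk
  induction k with
  | zero => omega
  | succ n ih =>
    rcases Nat.lt_or_ge 1 (n + 1) with h | h
    · have hn : 1 ≤ n := by omega
      have key : ∑ i ∈ Finset.range (n + 1),
          (if i = 0 then 1 - q 1 else if i = n + 1 then q (n + 1) else q i - q (i + 1)) * c i
          = (∑ i ∈ Finset.range (n + 1),
              (if i = 0 then 1 - q 1 else if i = n then q n else q i - q (i + 1)) * c i)
            - q (n + 1) * c n := by
        rw [Finset.sum_range_succ, Finset.sum_range_succ]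
        have hne : n ≠ 0 := by omega
        rw [if_neg hne, if_neg hne, if_neg (by omega : n ≠ n + 1), if_pos rfl]
        have hsum : ∀ i ∈ Finset.range n,
            (if i = 0 then 1 - q 1 else if i = n + 1 then q (n + 1) else q i - q (i + 1)) * c i
            = (if i = 0 then 1 - q 1 else if i = n then q n else q i - q (i + 1)) * c i := by
          intro i hi
          have hi' := Finset.mem_range.mp hi
          by_cases h0 : i = 0
          · simp [h0]
          · rw [if_neg h0, if_neg h0, if_neg (by omega : i ≠ n + 1), if_neg (by omega : i ≠ n)]
        rw [Finset.sum_congr rfl hsum]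
        ring
      rw [Finset.sum_range_succ, key, ih hn, Finset.sum_range_succ,
        if_neg (by omega : n + 1 ≠ 0), if_pos rfl]
      ring
    · have hn : n = 0 := by omega
      subst hn
      simp [Finset.sum_range_succ]
      ring

/-- The combined profile is `e/(e-1)`-competitive for the multislope instance,
given that each two-slope profile is `e/(e-1)`-competitive. -/
theorem combined_profile_competitive (k : ℕ) (hk : 1 ≤ k) (b r : ℕ → ℝ)
    (hb0 : b 0 = 0) (hrk : r k = 0)
    (hb : ∀ i < k, b i < b (i + 1)) (hr : ∀ i < k, r (i + 1) < r i)
    (hs : ∀ i, 1 ≤ i → i < k →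
      (b i - b (i - 1)) / (r (i - 1) - r i) < (b (i + 1) - b i) / (r i - r (i + 1)))
    (p : ℕ → ℝ → ℝ) (hcont : ∀ i, Continuous (p i))
    (hrange : ∀ i t, 1 ≤ i → i ≤ k → 0 ≤ t → p i t ∈ Set.Icc (0 : ℝ) 1)
    (hmono : ∀ i t, 2 ≤ i → i ≤ k → 0 ≤ t → p i t ≤ p (i - 1) t)
    (hcomp : ∀ i, 1 ≤ i → i ≤ k → ∀ t, 0 ≤ t →
      p i t * (b i - b (i - 1)) + (∫ z in (0:ℝ)..t, (1 - p i z) * (r (i - 1) - r i))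
        ≤ (Real.exp 1 / (Real.exp 1 - 1)) * min (b i - b (i - 1)) ((r (i - 1) - r i) * t))
    (t : ℝ) (ht : 0 ≤ t) :
    (∑ i ∈ Finset.range (k + 1),
        (if i = 0 then 1 - p 1 t else if i = k then p k t else p i t - p (i + 1) t) * b i)
      + (∫ z in (0:ℝ)..t, ∑ i ∈ Finset.range (k + 1),
          (if i = 0 then 1 - p 1 z else if i = k then p k z else p i z - p (i + 1) z) * r i)
      ≤ (Real.exp 1 / (Real.exp 1 - 1)) *
          (Finset.range (k + 1)).inf' (by simp) (fun i => b i + r i * t) := by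
  set ρ : ℝ := Real.exp 1 / (Real.exp 1 - 1) with hρ
  have hρ0 : 0 ≤ ρ := by
    have h2 : (2:ℝ) ≤ Real.exp 1 := by linarith [Real.add_one_le_exp (1:ℝ)]
    apply div_nonneg (Real.exp_nonneg 1)
    linarith
  -- telescoping identity for r 0
  have hr0 : r 0 = ∑ i ∈ Finset.range k, (r i - r (i + 1)) := by
    rw [Finset.sum_range_sub' r, hrk, sub_zero]
  -- rewrite the B sum
  have hB : ∑ i ∈ Finset.range (k + 1),
      (if i = 0 then 1 - p 1 t else if i = k then p k t else p i t - p (i + 1) t) * b i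
      = ∑ i ∈ Finset.range k, p (i + 1) t * (b (i + 1) - b i) := by
    rw [abel_sum (fun i => p i t) b k hk, hb0, zero_add]
  -- rewrite the R sum, pointwise in z
  have hR : ∀ z : ℝ, ∑ i ∈ Finset.range (k + 1),
      (if i = 0 then 1 - p 1 z else if i = k then p k z else p i z - p (i + 1) z) * r i
      = ∑ i ∈ Finset.range k, (1 - p (i + 1) z) * (r i - r (i + 1)) := by
    intro z
    rw [abel_sum (fun i => p i z) r k hk]
    rw [hr0]
    rw [← Finset.sum_add_distrib]
    apply Finset.sum_congr rfl
    intro i _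
    ring
  -- rewrite the integral
  have hInt : (∫ z in (0:ℝ)..t, ∑ i ∈ Finset.range (k + 1),
      (if i = 0 then 1 - p 1 z else if i = k then p k z else p i z - p (i + 1) z) * r i)
      = ∑ i ∈ Finset.range k, ∫ z in (0:ℝ)..t, (1 - p (i + 1) z) * (r i - r (i + 1)) := by
    rw [intervalIntegral.integral_congr (g := fun z =>
        ∑ i ∈ Finset.range k, (1 - p (i + 1) z) * (r i - r (i + 1)))
        (fun z _ => hR z)]
    apply intervalIntegral.integral_finset_sum
    intro i _
    exact (((continuous_const.sub (hcont (i + 1))).mul continuous_const)).intervalIntegrable 0 t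
  rw [hB, hInt, ← Finset.sum_add_distrib]
  -- bound by the sum of mins
  have step1 : ∑ i ∈ Finset.range k,
      (p (i + 1) t * (b (i + 1) - b i) + ∫ z in (0:ℝ)..t, (1 - p (i + 1) z) * (r i - r (i + 1)))
      ≤ ρ * ∑ i ∈ Finset.range k, min (b (i + 1) - b i) ((r i - r (i + 1)) * t) := by
    rw [Finset.mul_sum]
    apply Finset.sum_le_sum
    intro i hi
    have hik := Finset.mem_range.mp hi
    have := hcomp (i + 1) (by omega) (by omega : i + 1 ≤ k) t ht
    simpa using this
  refine le_trans step1 ?_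
  apply mul_le_mul_of_nonneg_left _ hρ0
  -- sum of mins ≤ each b j + r j t
  apply Finset.le_inf'
  intro j hj
  have hjk : j ≤ k := by
    have := Finset.mem_range.mp hj; omega
  have split : Finset.range k = Finset.range j ∪ Finset.Ico j k := by
    rw [Finset.range_eq_Ico, Finset.range_eq_Ico]
    exact (Finset.Ico_union_Ico_eq_Ico (Nat.zero_le j) hjk).symm
  rw [split, Finset.sum_union (by
    apply Finset.disjoint_left.mpr
    intro a ha hb'
    have := Finset.mem_range.mp ha
    have := (Finset.mem_Ico.mp hb').1
    omega)]
  have h1 : ∑ i ∈ Finset.range j, min (b (i + 1) - b i) ((r i - r (i + 1)) * t) ≤ b j := by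
    calc ∑ i ∈ Finset.range j, min (b (i + 1) - b i) ((r i - r (i + 1)) * t)
        ≤ ∑ i ∈ Finset.range j, (b (i + 1) - b i) :=
          Finset.sum_le_sum fun i _ => min_le_left _ _
      _ = b j - b 0 := Finset.sum_range_sub b j
      _ = b j := by rw [hb0, sub_zero]
  have h2 : ∑ i ∈ Finset.Ico j k, min (b (i + 1) - b i) ((r i - r (i + 1)) * t) ≤ r j * t := by
    calc ∑ i ∈ Finset.Ico j k, min (b (i + 1) - b i) ((r i - r (i + 1)) * t)
        ≤ ∑ i ∈ Finset.Ico j k, (r i - r (i + 1)) * t :=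
          Finset.sum_le_sum fun i _ => min_le_right _ _
      _ = (∑ i ∈ Finset.Ico j k, (r i - r (i + 1))) * t := by rw [Finset.sum_mul]
      _ = (r j - r k) * t := by
          congr 1
          rw [Finset.sum_Ico_eq_sub _ hjk, Finset.sum_range_sub' r, Finset.sum_range_sub' r]
          ring
      _ = r j * t := by rw [hrk, sub_zero]
  linarith
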